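/- Let G be a cactus graph, i.e., a connected simple graph in which any two cycles whose edge sets are distinct have disjoint edge sets. Then any two cycles of G whose edge sets are distinct share at most one vertex; that is, if c₁ and c₂ are closed walks in G that are cycles and whose traversed edge sets differ, then the set of vertices visited by c₁ and the set of vertices visited by c₂ have at most one vertex in common. -/

import Mathlib

open SimpleGraph Walk

/-- Any vertex of a nonempty closed walk lies in the tail of its support. -/
private lemma mem_tail_of_closed {V : Type*} {G : SimpleGraph V} {v w : V}
    (c : G.Walk v v) (hc : c ≠ SimpleGraph.Walk.nil) (hw : w ∈ c.support) :
    w ∈ c.support.tail := by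
  cases c with
  | nil => exact absurd rfl hc
  | cons h p =>
    simp only [SimpleGraph.Walk.support_cons, List.tail_cons]
    simp only [SimpleGraph.Walk.support_cons, List.mem_cons] at hw
    rcases hw with rfl | hw
    · exact p.end_mem_support
    · exact hw

private lemma exists_edge_of_ne {V : Type*} {G : SimpleGraph V} {x z : V}
    (P : G.Walk x z) (h : x ≠ z) : ∃ e, e ∈ P.edges := by
  cases P with
  | nil => exact absurd rfl h
  | cons h' p => exact ⟨_, List.mem_cons_self⟩

/-- From a path `Q : x → y` and a list `L` containing `y` (with `x ≠ y`), extract an initial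
segment of `Q` which is a path from `x` to some `z ∈ L`, `z ≠ x`, whose interior avoids `L`. -/
private lemma exists_initial_segment {V : Type*} {G : SimpleGraph V} :
    ∀ {x y : V} (Q : G.Walk x y), Q.IsPath → ∀ (L : List V), y ∈ L → x ≠ y →
    ∃ (z : V) (Q' : G.Walk x z), Q'.IsPath ∧ z ∈ L ∧ z ≠ x ∧
      (∀ e ∈ Q'.edges, e ∈ Q.edges) ∧ (∀ v ∈ Q'.support, v ∈ Q.support) ∧
      (∀ v ∈ Q'.support, v ≠ x → v ≠ z → v ∉ L) := by
  intro x y Q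
  induction Q with
  | nil => intro _ _ _ hxy; exact absurd rfl hxy
  | @cons x v y h Q₀ ih =>
    intro hQ L hyL hxy
    have hQ₀ : Q₀.IsPath := (Walk.cons_isPath_iff h Q₀).mp hQ |>.1
    have hxQ₀ : x ∉ Q₀.support := ((Walk.cons_isPath_iff h Q₀).mp hQ).2
    by_cases hv : v ∈ L
    · refine ⟨v, Walk.cons h Walk.nil, ?_, hv, h.ne', ?_, ?_, ?_⟩
      · simp [Walk.cons_isPath_iff, h.ne]
      · intro e he; simp at he; simp [he]
      · intro w hw
        simp only [Walk.support_cons, Walk.support_nil, List.mem_cons,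
          List.mem_singleton] at hw
        simp only [Walk.support_cons, List.mem_cons]
        rcases hw with rfl | hw
        · exact Or.inl rfl
        · simp at hw; subst hw; exact Or.inr Q₀.start_mem_support
      · intro w hw hwx hwv
        simp only [Walk.support_cons, Walk.support_nil, List.mem_cons,
          List.mem_singleton] at hw
        rcases hw with rfl | hw
        · exact absurd rfl hwx
        · simp at hw; exact absurd hw hwv
    · have hvy : v ≠ y := fun hh => hv (hh ▸ hyL)
      obtain ⟨z, Q₀', hQ₀'p, hzL, hzv, hQe, hQs, hint⟩ := ih hQ₀ L hyL hvy
      have hzQ₀ : z ∈ Q₀.support := hQs z Q₀'.end_mem_support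
      refine ⟨z, Walk.cons h Q₀', ?_, hzL, fun hh => hxQ₀ (hh ▸ hzQ₀), ?_, ?_, ?_⟩
      · exact (Walk.cons_isPath_iff h Q₀').mpr ⟨hQ₀'p, fun hx => hxQ₀ (hQs x hx)⟩
      · intro e he
        simp only [Walk.edges_cons, List.mem_cons] at he ⊢
        rcases he with rfl | he
        · exact Or.inl rfl
        · exact Or.inr (hQe e he)
      · intro w hw
        simp only [Walk.support_cons, List.mem_cons] at hw ⊢
        rcases hw with rfl | hw
        · exact Or.inl rfl
        · exact Or.inr (hQs w hw)
      · intro w hw hwx hwz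
        simp only [Walk.support_cons, List.mem_cons] at hw
        rcases hw with rfl | hw
        · exact absurd rfl hwx
        · by_cases hwv : w = v
          · exact hwv ▸ hv
          · exact hint w hw hwv hwz

/-- In a cactus graph (a connected simple graph in which any two cycles with distinct
edge sets have disjoint edge sets), any two cycles with distinct edge sets share at
most one vertex. -/
theorem cactus_cycles_share_at_most_one_vertex {V : Type*} (G : SimpleGraph V)
    (hconn : G.Connected)
    (hcactus : ∀ (a b : V) (c₁ : G.Walk a a) (c₂ : G.Walk b b),
      c₁.IsCycle → c₂.IsCycle →
      {e | e ∈ c₁.edges} ≠ {e | e ∈ c₂.edges} →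
      ∀ e, e ∈ c₁.edges → e ∉ c₂.edges)
    (a b : V) (c₁ : G.Walk a a) (c₂ : G.Walk b b)
    (h₁ : c₁.IsCycle) (h₂ : c₂.IsCycle)
    (hne : {e | e ∈ c₁.edges} ≠ {e | e ∈ c₂.edges}) :
    ∀ x y : V, x ∈ c₁.support → x ∈ c₂.support →
      y ∈ c₁.support → y ∈ c₂.support → x = y := by
  classical
  intro x y hx1 hx2 hy1 hy2
  by_contra hxy
  have hdisj : ∀ e, e ∈ c₁.edges → e ∉ c₂.edges := hcactus a b c₁ c₂ h₁ h₂ hne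
  -- path P from x to y inside c₁
  have hy1' : y ∈ (c₁.rotate x hx1).support := by
    have := mem_tail_of_closed c₁ h₁.ne_nil hy1
    have h2 : y ∈ (c₁.rotate x hx1).support.tail :=
      (Walk.support_rotate c₁ x hx1).mem_iff.mpr this
    exact List.mem_of_mem_tail h2
  set P : G.Walk x y := ((c₁.rotate x hx1).takeUntil y hy1').bypass with hPdef
  have hP : P.IsPath := Walk.bypass_isPath _
  have hPe : ∀ e ∈ P.edges, e ∈ c₁.edges := by
    intro e he
    have h2 := Walk.edges_takeUntil_subset (c₁.rotate x hx1) hy1'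
      (Walk.edges_bypass_subset _ he)
    exact (Walk.rotate_edges c₁ x hx1).mem_iff.mp h2
  -- path Q from x to y inside c₂
  have hy2' : y ∈ (c₂.rotate x hx2).support := by
    have := mem_tail_of_closed c₂ h₂.ne_nil hy2
    have h2 : y ∈ (c₂.rotate x hx2).support.tail :=
      (Walk.support_rotate c₂ x hx2).mem_iff.mpr this
    exact List.mem_of_mem_tail h2
  set Q : G.Walk x y := ((c₂.rotate x hx2).takeUntil y hy2').bypass with hQdef
  have hQ : Q.IsPath := Walk.bypass_isPath _
  have hQe : ∀ e ∈ Q.edges, e ∈ c₂.edges := by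
    intro e he
    have h2 := Walk.edges_takeUntil_subset (c₂.rotate x hx2) hy2'
      (Walk.edges_bypass_subset _ he)
    exact (Walk.rotate_edges c₂ x hx2).mem_iff.mp h2
  -- extract initial segment of Q ending at the first vertex z of P it meets
  obtain ⟨z, Q', hQ'p, hzP, hzx, hQ'e, hQ's, hint⟩ :=
    exists_initial_segment Q hQ P.support P.end_mem_support hxy
  -- take P up to z
  set P' : G.Walk x z := P.takeUntil z hzP with hP'def
  have hP'p : P'.IsPath := hP.takeUntil hzP
  have hP'e : ∀ e ∈ P'.edges, e ∈ c₁.edges :=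
    fun e he => hPe e (Walk.edges_takeUntil_subset P hzP he)
  have hQ'e2 : ∀ e ∈ Q'.edges, e ∈ c₂.edges := fun e he => hQe e (hQ'e e he)
  -- the combined closed walk
  set C : G.Walk x x := P'.append Q'.reverse with hCdef
  have hCe : C.edges = P'.edges ++ Q'.edges.reverse := by
    rw [hCdef, Walk.edges_append, Walk.edges_reverse]
  obtain ⟨e1, he1⟩ := exists_edge_of_ne P' (Ne.symm hzx)
  obtain ⟨e2, he2⟩ := exists_edge_of_ne Q' (Ne.symm hzx)
  have he1C : e1 ∈ C.edges := by rw [hCe]; exact List.mem_append_left _ he1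
  have he2C : e2 ∈ C.edges := by
    rw [hCe]; exact List.mem_append_right _ (List.mem_reverse.mpr he2)
  have hCtrail : C.IsTrail := by
    constructor
    rw [hCe, List.nodup_append]
    refine ⟨hP'p.isTrail.edges_nodup, List.nodup_reverse.mpr hQ'p.isTrail.edges_nodup, ?_⟩
    intro e heP e' heQ hee; subst hee
    exact hdisj e (hP'e e heP) (hQ'e2 e (List.mem_reverse.mp heQ))
  have hCnenil : C ≠ Walk.nil := by
    intro h
    rw [h] at he1C
    simp at he1C
  have hCtail : C.support.tail = P'.support.tail ++ Q'.reverse.support.tail := by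
    rw [hCdef, Walk.support_append]
    conv_lhs => rw [P'.support_eq_cons]
    simp [List.cons_append]
  have hCcycle : C.IsCycle := by
    refine ⟨⟨hCtrail, hCnenil⟩, ?_⟩
    rw [hCtail, List.nodup_append]
    refine ⟨hP'p.support_nodup.tail, (hQ'p.reverse.support_nodup).tail, ?_⟩
    intro v hvP v' hvQ hvv; subst hvv
    -- v in tail of reverse support of Q' : v ∈ Q'.support and v ≠ z
    have hQrev : Q'.reverse.support = z :: Q'.reverse.support.tail :=
      Q'.reverse.support_eq_cons
    have hvQ' : v ∈ Q'.support := by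
      have : v ∈ Q'.reverse.support := List.mem_of_mem_tail hvQ
      rwa [Walk.support_reverse, List.mem_reverse] at this
    have hvz : v ≠ z := by
      intro hh
      have hnd := hQ'p.reverse.support_nodup
      rw [hQrev] at hnd
      exact (List.nodup_cons.mp hnd).1 (hh ▸ hvQ)
    have hvx : v ≠ x := by
      intro hh
      have hnd := hP'p.support_nodup
      rw [P'.support_eq_cons] at hnd
      exact (List.nodup_cons.mp hnd).1 (hh ▸ hvP)
    have hvnotP : v ∉ P.support := hint v hvQ' hvx hvz
    exact hvnotP (Walk.support_takeUntil_subset P hzP (List.mem_of_mem_tail hvP))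
  -- final contradiction via cactus property applied to C and c₂
  have hCne : {e | e ∈ C.edges} ≠ {e | e ∈ c₂.edges} := by
    intro hEq
    have : e1 ∈ c₂.edges := (Set.ext_iff.mp hEq e1).mp he1C
    exact hdisj e1 (hP'e e1 he1) this
  have hd2 := hcactus x b C c₂ hCcycle h₂ hCne
  exact (hd2 e2 he2C) (hQ'e2 e2 he2)
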